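/- Let (W,S) be a Coxeter system, Q a word of length m in the generators S, π ∈ W with ℓ(π) = ℓ, and W a set of reduced words for π such that some subsequence of Q lies in W. Then every facet of Δ_W(Q,π) has cardinality m − ℓ, and every face of Δ_W(Q,π) of cardinality m − ℓ − 1 is contained in at most two facets of Δ_W(Q,π). -/

import Mathlib

/-!
STATEMENT 9: Let (W,S) be a Coxeter system, Q a word of length m in the generators S,
π ∈ W with ℓ(π) = ℓ, and 𝒲 a set of reduced words for π such that some subsequence of Q
lies in 𝒲. Then every facet of Δ_𝒲(Q,π) has cardinality m − ℓ, and every face of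
Δ_𝒲(Q,π) of cardinality m − ℓ − 1 is contained in at most two facets of Δ_𝒲(Q,π).
-/

open scoped Classical

/-- `F` is a facet (inclusion-maximal face) of the abstract simplicial complex `Δ`. -/
def IsFacet {V : Type*} (Δ : Set (Finset V)) (F : Finset V) : Prop :=
  F ∈ Δ ∧ ∀ G ∈ Δ, F ⊆ G → F = G

variable {B W : Type*} [Group W] {M : CoxeterMatrix B}

/-- The word at the positions of `Q` not in `P`. -/
def complementWord (Q : List B) (P : Finset (Fin Q.length)) : List B :=
  ((List.finRange Q.length).filter (fun i => i ∉ P)).map Q.get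

/-- The complex `Δ_𝒲(Q,π)`. -/
def DeltaW (Ws : Set (List B)) (Q : List B) : Set (Finset (Fin Q.length)) :=
  {P | ∃ w ∈ Ws, w.Sublist (complementWord Q P)}

section Aux

open List

/- ### generic list lemmas -/

lemma aux_eraseIdx_eraseIdx {α : Type*} {c : List α} {i j : ℕ} (h : i < j) :
    (c.eraseIdx j).eraseIdx i = (c.eraseIdx i).eraseIdx (j - 1) := by
  induction c generalizing i j with
  | nil => simp
  | cons a t ih =>
    cases i with
    | zero =>
      obtain ⟨j', rfl⟩ : ∃ j', j = j' + 1 := ⟨j - 1, by omega⟩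
      simp
    | succ i' =>
      obtain ⟨j', rfl⟩ : ∃ j', j = j' + 1 := ⟨j - 1, by omega⟩
      have hij : i' < j' := by omega
      obtain ⟨j'', rfl⟩ : ∃ j'', j' = j'' + 1 := ⟨j' - 1, by omega⟩
      simp only [eraseIdx_cons_succ, Nat.add_sub_cancel]
      rw [ih hij]
      simp

lemma aux_map_eraseIdx {α β : Type*} (f : α → β) (l : List α) (i : ℕ) :
    (l.map f).eraseIdx i = (l.eraseIdx i).map f := by
  induction l generalizing i with
  | nil => simp
  | cons a t ih =>
    cases i with
    | zero => simp
    | succ i' => simp [ih]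

lemma aux_sublist_eraseIdx {α : Type*} {w u : List α} (h : w.Sublist u)
    (hlen : w.length < u.length) : ∃ i < u.length, w.Sublist (u.eraseIdx i) := by
  induction h with
  | slnil => simp at hlen
  | @cons l₁ l₂ a h ih =>
    exact ⟨0, by simp, by simpa using h⟩
  | @cons_cons l₁ l₂ a h ih =>
    obtain ⟨i, hi, hs⟩ := ih (by simpa using hlen)
    exact ⟨i + 1, by simpa using hi, by simpa using hs.cons₂ a⟩

/- ### the complement word -/

lemma aux_length_filter_not_mem (Q : List B) (P : Finset (Fin Q.length)) :
    ((List.finRange Q.length).filter (fun i => i ∉ P)).length = Q.length - P.card := by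
  set l := (List.finRange Q.length).filter (fun i => i ∉ P) with hl
  have hnd : l.Nodup := (List.nodup_finRange Q.length).filter _
  have htf : l.toFinset = Pᶜ := by
    ext x
    simp [hl, List.mem_filter, List.mem_finRange]
  have : l.toFinset.card = l.length := by
    rw [List.card_toFinset, hnd.dedup]
  rw [← this, htf, Finset.card_compl, Fintype.card_fin]

lemma aux_length_complementWord (Q : List B) (P : Finset (Fin Q.length)) :
    (complementWord Q P).length = Q.length - P.card := by
  rw [complementWord, List.length_map, aux_length_filter_not_mem]

lemma aux_complementWord_insert (Q : List B) (P : Finset (Fin Q.length)) (i : ℕ)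
    (hi : i < ((List.finRange Q.length).filter (fun j => j ∉ P)).length) :
    complementWord Q
        (insert (((List.finRange Q.length).filter (fun j => j ∉ P)).get ⟨i, hi⟩) P)
      = (complementWord Q P).eraseIdx i := by
  set l := (List.finRange Q.length).filter (fun j => j ∉ P) with hldef
  set x := l.get ⟨i, hi⟩ with hxdef
  have hnd : l.Nodup := (List.nodup_finRange Q.length).filter _
  have hxl : x ∈ l := List.get_mem _ _
  have key : (List.finRange Q.length).filter (fun j => j ∉ insert x P) = l.eraseIdx i := by
    have h1 : l.eraseIdx i = l.erase x := by
      rw [hxdef, List.get_eq_getElem, ← hnd.erase_getElem]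
    have h2 : l.erase x = l.filter (fun j => j ≠ x) := by
      rw [hnd.erase_eq_filter]
      apply List.filter_congr
      intro a _
      simp [bne, _root_.beq_eq_decide]
    rw [h1, h2, hldef, List.filter_filter]
    apply List.filter_congr
    intro a _
    by_cases h1 : a ∈ P <;> by_cases h2 : a = x <;>
      simp [h1, h2, Finset.mem_insert]
  rw [complementWord, key, ← aux_map_eraseIdx, hldef]
  rfl

lemma aux_mem_filter_not_mem {Q : List B} {P : Finset (Fin Q.length)} {x : Fin Q.length} :
    x ∈ (List.finRange Q.length).filter (fun j => j ∉ P) ↔ x ∉ P := by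
  simp [List.mem_filter, List.mem_finRange]

/- ### Coxeter-theoretic core -/

lemma aux_lis_getD_eraseIdx (cs : CoxeterSystem M W) (c : List B) {i n : ℕ}
    (hin : i < n) (hn : n < c.length) :
    (cs.leftInvSeq (c.eraseIdx n)).getD i 1 = (cs.leftInvSeq c).getD i 1 := by
  have htake : (c.eraseIdx n).take i = c.take i := by
    rw [List.eraseIdx_eq_take_drop_succ, List.take_append_of_le_length
      (by rw [List.length_take]; omega)]
    rw [List.take_take, min_eq_left (by omega)]
  have hget : (c.eraseIdx n)[i]? = (c)[i]? := by
    rw [List.eraseIdx_eq_take_drop_succ]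
    rw [List.getElem?_append_left (by rw [List.length_take]; omega),
      List.getElem?_take_of_lt hin]
  rw [cs.getD_leftInvSeq, cs.getD_leftInvSeq, htake, hget]

/-- Key lemma: a word `c` cannot have three positions `i < j < k` such that deleting any
one of them yields a reduced word for `π`. -/
lemma aux_key_sorted (cs : CoxeterSystem M W) (π : W) (c : List B) {i j k : ℕ}
    (hij : i < j) (hjk : j < k) (hk : k < c.length)
    (hi' : cs.IsReduced (c.eraseIdx i) ∧ cs.wordProd (c.eraseIdx i) = π)
    (hj' : cs.IsReduced (c.eraseIdx j) ∧ cs.wordProd (c.eraseIdx j) = π)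
    (hk' : cs.IsReduced (c.eraseIdx k) ∧ cs.wordProd (c.eraseIdx k) = π) : False := by
  set d := c.eraseIdx i with hd
  have hdlen : d.length = c.length - 1 :=
    List.length_eraseIdx_of_lt (by omega)
  have main : ∀ n, i < n → n < c.length → cs.wordProd (c.eraseIdx n) = π →
      (cs.leftInvSeq d).getD (n - 1) 1 = (cs.leftInvSeq c).getD i 1 := by
    intro n hin hn hprod
    have h1 : (cs.leftInvSeq d).getD (n - 1) 1 * cs.wordProd d
        = cs.wordProd (d.eraseIdx (n - 1)) := cs.getD_leftInvSeq_mul_wordProd d (n - 1)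
    have h2 : d.eraseIdx (n - 1) = (c.eraseIdx n).eraseIdx i := (aux_eraseIdx_eraseIdx hin).symm
    have h3 : (cs.leftInvSeq (c.eraseIdx n)).getD i 1 * cs.wordProd (c.eraseIdx n)
        = cs.wordProd ((c.eraseIdx n).eraseIdx i) := cs.getD_leftInvSeq_mul_wordProd _ i
    rw [h2, ← h3, hprod, aux_lis_getD_eraseIdx cs c hin hn, hi'.2] at h1
    exact mul_right_cancel h1
  have e1 := main j hij (by omega) hj'.2
  have e2 := main k (by omega) hk hk'.2
  have hnd : (cs.leftInvSeq d).Nodup := hi'.1.nodup_leftInvSeq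
  have hlen : (cs.leftInvSeq d).length = d.length := cs.length_leftInvSeq d
  have hj1 : j - 1 < (cs.leftInvSeq d).length := by omega
  have hk1 : k - 1 < (cs.leftInvSeq d).length := by omega
  have : (cs.leftInvSeq d)[j-1] = (cs.leftInvSeq d)[k-1] := by
    rw [← List.getD_eq_getElem _ 1 hj1, ← List.getD_eq_getElem _ 1 hk1, e1, e2]
  have := (hnd.getElem_inj_iff).mp this
  omega

lemma aux_key (cs : CoxeterSystem M W) (π : W) (c : List B) {p q r : ℕ}
    (hpq : p ≠ q) (hpr : p ≠ r) (hqr : q ≠ r)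
    (hp : p < c.length) (hq : q < c.length) (hr : r < c.length)
    (Hp : cs.IsReduced (c.eraseIdx p) ∧ cs.wordProd (c.eraseIdx p) = π)
    (Hq : cs.IsReduced (c.eraseIdx q) ∧ cs.wordProd (c.eraseIdx q) = π)
    (Hr : cs.IsReduced (c.eraseIdx r) ∧ cs.wordProd (c.eraseIdx r) = π) : False := by
  rcases lt_trichotomy p q with h1 | h1 | h1
  · rcases lt_trichotomy q r with h2 | h2 | h2
    · exact aux_key_sorted cs π c h1 h2 hr Hp Hq Hr
    · exact hqr h2
    · rcases lt_trichotomy p r with h3 | h3 | h3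
      · exact aux_key_sorted cs π c h3 h2 hq Hp Hr Hq
      · exact hpr h3
      · exact aux_key_sorted cs π c h3 h1 hq Hr Hp Hq
  · exact hpq h1
  · rcases lt_trichotomy p r with h2 | h2 | h2
    · exact aux_key_sorted cs π c h1 h2 hr Hq Hp Hr
    · exact hpr h2
    · rcases lt_trichotomy q r with h3 | h3 | h3
      · exact aux_key_sorted cs π c h3 h2 hp Hq Hr Hp
      · exact hqr h3
      · exact aux_key_sorted cs π c h3 h1 hp Hr Hq Hp

end Aux

theorem deltaW_facets_and_thinness (cs : CoxeterSystem M W) (Q : List B) (π : W)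
    (Ws : Set (List B))
    (hred : ∀ w ∈ Ws, cs.IsReduced w ∧ cs.wordProd w = π)
    (hQ : ∃ w ∈ Ws, w.Sublist Q) :
    (∀ F : Finset (Fin Q.length), IsFacet (DeltaW Ws Q) F →
      F.card = Q.length - cs.length π) ∧
    (∀ G : Finset (Fin Q.length), G ∈ DeltaW Ws Q →
      G.card = Q.length - cs.length π - 1 →
      {F : Finset (Fin Q.length) | IsFacet (DeltaW Ws Q) F ∧ G ⊆ F}.ncard ≤ 2) := by
  classical
  set m := Q.length with hm
  set L := cs.length π with hL
  have hWlen : ∀ w ∈ Ws, w.length = L := by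
    intro w hw
    have := (hred w hw).1
    rw [CoxeterSystem.IsReduced, (hred w hw).2] at this
    omega
  have hcardle : ∀ P : Finset (Fin m), P.card ≤ m := by
    intro P
    have := Finset.card_le_univ P
    simpa [Fintype.card_fin] using this
  -- Part (a)
  have parta : ∀ F : Finset (Fin m), IsFacet (DeltaW Ws Q) F → F.card = m - L := by
    intro F ⟨hF, hmax⟩
    obtain ⟨w, hw, hsub⟩ := hF
    have hwl : w.length = L := hWlen w hw
    have hcwl : (complementWord Q F).length = m - F.card := aux_length_complementWord Q F
    have hle : L ≤ m - F.card := by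
      have := hsub.length_le
      omega
    by_contra hne
    have hlt : w.length < (complementWord Q F).length := by
      have := hcardle F
      omega
    obtain ⟨i, hi, hs⟩ := aux_sublist_eraseIdx hsub hlt
    have hi' : i < ((List.finRange m).filter (fun j => j ∉ F)).length := by
      rw [complementWord, List.length_map] at hi
      exact hi
    set x := ((List.finRange m).filter (fun j => j ∉ F)).get ⟨i, hi'⟩ with hx
    have hxF : x ∉ F := aux_mem_filter_not_mem.mp (List.get_mem _ _)
    have hface : insert x F ∈ DeltaW Ws Q := by
      refine ⟨w, hw, ?_⟩
      rw [aux_complementWord_insert Q F i hi']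
      exact hs
    have := hmax _ hface (Finset.subset_insert x F)
    exact hxF (this ▸ Finset.mem_insert_self x F)
  refine ⟨parta, ?_⟩
  -- Part (b)
  intro G hG hGcard
  obtain ⟨w, hw, hsub⟩ := hG
  have hwl : w.length = L := hWlen w hw
  have hcwl : (complementWord Q G).length = m - G.card := aux_length_complementWord Q G
  have hle : L + G.card ≤ m := by
    have h1 := hsub.length_le
    have h2 := hcardle G
    omega
  by_cases hmL : m ≤ L
  · -- degenerate case : all facets are empty
    have hsub' : {F : Finset (Fin m) | IsFacet (DeltaW Ws Q) F ∧ G ⊆ F} ⊆ {(∅ : Finset (Fin m))} := by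
      intro F ⟨hF, _⟩
      have := parta F hF
      have : F.card = 0 := by omega
      simp [Finset.card_eq_zero.mp this]
    calc {F : Finset (Fin m) | IsFacet (DeltaW Ws Q) F ∧ G ⊆ F}.ncard
        ≤ ({(∅ : Finset (Fin m))} : Set (Finset (Fin m))).ncard :=
          Set.ncard_le_ncard hsub' (Set.finite_singleton _)
      _ = 1 := Set.ncard_singleton _
      _ ≤ 2 := by omega
  · push_neg at hmL
    have hGcard' : G.card + 1 = m - L := by omega
    set l := (List.finRange m).filter (fun j => j ∉ G) with hldef
    have hllen : l.length = m - G.card := aux_length_filter_not_mem Q G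
    set c := complementWord Q G with hc
    have hclen : c.length = m - G.card := hcwl
    -- from any facet containing G, extract an erasure position
    have hx : ∀ F : Finset (Fin m), IsFacet (DeltaW Ws Q) F → G ⊆ F →
        ∃ p : ℕ, ∃ hp : p < l.length, F = insert (l.get ⟨p, hp⟩) G ∧
          c.eraseIdx p ∈ Ws := by
      intro F hF hGF
      have hFcard : F.card = m - L := parta F hF
      have hdiff : (F \ G).card = 1 := by
        rw [Finset.card_sdiff_of_subset hGF]
        omega
      obtain ⟨x, hxx⟩ := Finset.card_eq_one.mp hdiff
      have hxG : x ∉ G := (Finset.mem_sdiff.mp (hxx ▸ Finset.mem_singleton_self x)).2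
      have hFeq : F = insert x G := by
        rw [Finset.insert_eq, Finset.union_comm, ← hxx, Finset.union_sdiff_of_subset hGF]
      have hxl : x ∈ l := aux_mem_filter_not_mem.mpr hxG
      obtain ⟨⟨p, hp⟩, hpx⟩ := List.mem_iff_get.mp hxl
      refine ⟨p, hp, by rw [hFeq, hpx], ?_⟩
      obtain ⟨w', hw', hsub'⟩ := hF.1
      have hcw : complementWord Q F = c.eraseIdx p := by
        rw [hFeq, ← hpx]
        exact aux_complementWord_insert Q G p hp
      rw [hcw] at hsub'
      have hlenc : (c.eraseIdx p).length = L := by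
        have := List.length_eraseIdx_of_lt (show p < c.length by omega)
        omega
      have : w' = c.eraseIdx p := hsub'.eq_of_length (by rw [hlenc, hWlen w' hw'])
      rwa [← this]
    -- now bound the number of facets
    by_contra hcon
    push_neg at hcon
    rw [Set.two_lt_ncard (Set.toFinite _)] at hcon
    obtain ⟨F₁, hF₁, F₂, hF₂, F₃, hF₃, h12, h13, h23⟩ := hcon
    obtain ⟨p₁, hp₁, hFe₁, hm₁⟩ := hx F₁ hF₁.1 hF₁.2
    obtain ⟨p₂, hp₂, hFe₂, hm₂⟩ := hx F₂ hF₂.1 hF₂.2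
    obtain ⟨p₃, hp₃, hFe₃, hm₃⟩ := hx F₃ hF₃.1 hF₃.2
    have hpne : ∀ {a b : ℕ} {ha : a < l.length} {hb : b < l.length},
        insert (l.get ⟨a, ha⟩) G ≠ insert (l.get ⟨b, hb⟩) G → a ≠ b := by
      intro a b ha hb hne hab
      subst hab
      exact hne rfl
    have hplen : ∀ {p : ℕ}, p < l.length → p < c.length := by
      intro p hp; omega
    exact aux_key cs π c
      (hpne (hFe₁ ▸ hFe₂ ▸ h12)) (hpne (hFe₁ ▸ hFe₃ ▸ h13)) (hpne (hFe₂ ▸ hFe₃ ▸ h23))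
      (hplen hp₁) (hplen hp₂) (hplen hp₃)
      (hred _ hm₁) (hred _ hm₂) (hred _ hm₃)
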